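/- An m-form α ∈ ΛᵐG* satisfies i(u)i(v)α = 0 for all u, v ∈ F if and only if α lies in the image of the wedge map G* ⊗ Λ^{m−1}(ann F) → ΛᵐG*, where ann F ⊆ G* is the annihilator of F; i.e., Λ₁ᵐG* is canonically isomorphic to (the image of) G* ∧ Λ^{m−1}π*(H*). -/

import Mathlib

/-- `Λ₁ᵐG*`: alternating `m`-forms on `G` vanishing whenever two distinct arguments lie in `F`
(equivalently `i(u)i(v)α = 0` for all `u,v ∈ F`). -/
def Lambda1 (K G : Type*) [Field K] [AddCommGroup G] [Module K G]
    (F : Submodule K G) (m : ℕ) : Submodule K (G [⋀^Fin m]→ₗ[K] K) where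
  carrier := {α | ∀ (x : Fin m → G) (i j : Fin m), i ≠ j → x i ∈ F → x j ∈ F → α x = 0}
  add_mem' := by
    intro a b ha hb x i j hij hi hj
    simp [ha x i j hij hi hj, hb x i j hij hi hj]
  zero_mem' := by intro x i j _ _ _; simp
  smul_mem' := by
    intro c a ha x i j hij hi hj
    simp [ha x i j hij hi hj]


/-- The wedge `c 0 ∧ c 1 ∧ … ∧ c (m-1)` of `m` covectors on `G`, as the alternating `m`-form
`x ↦ det (c i (x j))`. -/
noncomputable def wedgeDual (K G : Type*) [Field K] [AddCommGroup G] [Module K G]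
    {m : ℕ} (c : Fin m → Module.Dual K G) : G [⋀^Fin m]→ₗ[K] K :=
  (Matrix.detRowAlternating : (Fin m → K) [⋀^Fin m]→ₗ[K] K).compLinearMap (LinearMap.pi c)

theorem wedgeDual_apply (K G : Type*) [Field K] [AddCommGroup G] [Module K G]
    {m : ℕ} (c : Fin m → Module.Dual K G) (x : Fin m → G) :
    wedgeDual K G c x = Matrix.det (Matrix.of fun l k => c k (x l)) := rfl

theorem alt_eq_zero_of_pair {R M N ι : Type*} [CommRing R] [AddCommGroup M] [Module R M]
    [AddCommGroup N] [Module R N] [DecidableEq ι] (f : M [⋀^ι]→ₗ[R] N) (r : ι → M)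
    {i j : ι} (hij : i ≠ j) (v : M) (a b : R) (hi : r i = a • v) (hj : r j = b • v) :
    f r = 0 := by
  have h1 : f r = a • f (Function.update r i v) := by
    conv_lhs => rw [← Function.update_eq_self i r, hi]
    rw [f.map_update_smul]
  have h2 : Function.update r i v j = b • v := by
    rw [Function.update_of_ne (Ne.symm hij)]; exact hj
  have h3 : f (Function.update r i v) =
      b • f (Function.update (Function.update r i v) j v) := by
    conv_lhs => rw [← Function.update_eq_self j (Function.update r i v), h2]
    rw [f.map_update_smul]
  have h4 : f (Function.update (Function.update r i v) j v) = 0 := by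
    refine f.map_eq_zero_of_eq _ ?_ hij
    rw [Function.update_of_ne hij, Function.update_self, Function.update_self]
  rw [h1, h3, h4, smul_zero, smul_zero]

theorem mem_Lambda1 {K G : Type*} [Field K] [AddCommGroup G] [Module K G]
    {F : Submodule K G} {m : ℕ} {α : G [⋀^Fin m]→ₗ[K] K} :
    α ∈ Lambda1 K G F m ↔
      ∀ (x : Fin m → G) (i j : Fin m), i ≠ j → x i ∈ F → x j ∈ F → α x = 0 := Iff.rfl

theorem wedge_mem_Lambda1 {K G : Type*} [Field K] [AddCommGroup G] [Module K G]
    {F : Submodule K G} {m' : ℕ} (ξ : Module.Dual K G) (c : Fin m' → Module.Dual K G)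
    (hc : ∀ k, c k ∈ F.dualAnnihilator) :
    wedgeDual K G (Fin.cons ξ c) ∈ Lambda1 K G F (m' + 1) := by
  classical
  rw [mem_Lambda1]
  intro x i j hij hi hj
  rw [wedgeDual_apply]
  have key : ∀ l : Fin (m' + 1), x l ∈ F →
      (fun k => (Fin.cons ξ c : Fin (m'+1) → Module.Dual K G) k (x l)) =
        (ξ (x l)) • (Pi.single (0 : Fin (m'+1)) (1 : K) : Fin (m'+1) → K) := by
    intro l hl
    funext k
    refine Fin.cases ?_ ?_ k
    · simp
    · intro k'
      have : c k' (x l) = 0 := (Submodule.mem_dualAnnihilator _).mp (hc k') _ hl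
      simp [this, Pi.single_eq_of_ne (Fin.succ_ne_zero k')]
  exact alt_eq_zero_of_pair Matrix.detRowAlternating _ hij (Pi.single (0 : Fin (m'+1)) (1 : K))
    (ξ (x i)) (ξ (x j)) (key i hi) (key j hj)

theorem span_le_Lambda1 {K G : Type*} [Field K] [AddCommGroup G] [Module K G]
    (F : Submodule K G) (m' : ℕ) :
    Submodule.span K
        {x : G [⋀^Fin (m' + 1)]→ₗ[K] K |
          ∃ (ξ : Module.Dual K G) (c : Fin m' → Module.Dual K G),
            (∀ k, c k ∈ F.dualAnnihilator) ∧ x = wedgeDual K G (Fin.cons ξ c)} ≤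
      Lambda1 K G F (m' + 1) := by
  rw [Submodule.span_le]
  rintro x ⟨ξ, c, hc, rfl⟩
  exact wedge_mem_Lambda1 ξ c hc

section Diag

variable {K G : Type*} [Field K] [AddCommGroup G] [Module K G]
  {m' : ℕ} {ιF : Type*} [Fintype ιF] [DecidableEq ιF]

/-- The canonical tuple with one `F`-basis vector in front. -/
noncomputable def tTup (b : Module.Basis (ιF ⊕ Fin (m' + 1)) K G) (i : ιF) (j : Fin (m' + 1)) :
    Fin (m' + 1) → G :=
  Fin.cons (b (Sum.inl i)) (fun k => b (Sum.inr (j.succAbove k)))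

/-- The wedge with one `F`-dual covector in front. -/
noncomputable def wdW (b : Module.Basis (ιF ⊕ Fin (m' + 1)) K G) (i : ιF) (j : Fin (m' + 1)) :
    G [⋀^Fin (m' + 1)]→ₗ[K] K :=
  wedgeDual K G (Fin.cons (b.dualBasis (Sum.inl i))
    (fun k => b.dualBasis (Sum.inr (j.succAbove k))))

/-- The full wedge of the `W`-part dual covectors. -/
noncomputable def wdFull (b : Module.Basis (ιF ⊕ Fin (m' + 1)) K G) :
    G [⋀^Fin (m' + 1)]→ₗ[K] K :=
  wedgeDual K G (fun k => b.dualBasis (Sum.inr k))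

variable (b : Module.Basis (ιF ⊕ Fin (m' + 1)) K G)

theorem hdualb (p q : ιF ⊕ Fin (m' + 1)) : b.dualBasis p (b q) = if q = p then 1 else 0 :=
  b.dualBasis_apply_self p q

theorem diag_full_full : wdFull b (fun k => b (Sum.inr k)) = 1 := by
  rw [wdFull, wedgeDual_apply]
  have : (Matrix.of fun l k => b.dualBasis (Sum.inr k) (b (Sum.inr l))) = 1 := by
    ext l k
    rw [Matrix.of_apply, hdualb, Matrix.one_apply]
    simp
  rw [this, Matrix.det_one]

theorem diag_W_full (i : ιF) (j : Fin (m' + 1)) : wdW b i j (fun k => b (Sum.inr k)) = 0 := by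
  rw [wdW, wedgeDual_apply]
  apply Matrix.det_eq_zero_of_column_eq_zero 0
  intro l
  rw [Matrix.of_apply]
  simp [hdualb]

theorem diag_full_t (i : ιF) (j : Fin (m' + 1)) : wdFull b (tTup b i j) = 0 := by
  rw [wdFull, wedgeDual_apply]
  apply Matrix.det_eq_zero_of_row_eq_zero 0
  intro k
  rw [Matrix.of_apply]
  simp [tTup, hdualb]

theorem diag_W_t_self (i : ιF) (j : Fin (m' + 1)) : wdW b i j (tTup b i j) = 1 := by
  rw [wdW, wedgeDual_apply]
  have : (Matrix.of fun l k =>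
      (Fin.cons (b.dualBasis (Sum.inl i))
        (fun k' => b.dualBasis (Sum.inr (j.succAbove k'))) : Fin (m' + 1) → Module.Dual K G) k
        (tTup b i j l)) = 1 := by
    ext l k
    rw [Matrix.of_apply, Matrix.one_apply]
    refine Fin.cases ?_ ?_ l
    · refine Fin.cases ?_ ?_ k
      · simp [tTup, hdualb]
      · intro k'
        simp [tTup, hdualb, (Fin.succ_ne_zero k').symm]
    · intro l'
      refine Fin.cases ?_ ?_ k
      · simp [tTup, hdualb, Fin.succ_ne_zero l']
      · intro k'
        simp only [tTup, Fin.cons_succ]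
        rw [hdualb]
        simp [Fin.succAbove_right_injective.eq_iff, Fin.succ_inj]
  rw [this, Matrix.det_one]

theorem diag_W_t_ne_i (i : ιF) (j : Fin (m' + 1)) (i' : ιF) (j' : Fin (m' + 1))
    (h : i' ≠ i) : wdW b i j (tTup b i' j') = 0 := by
  rw [wdW, wedgeDual_apply]
  apply Matrix.det_eq_zero_of_column_eq_zero 0
  intro l
  rw [Matrix.of_apply]
  refine Fin.cases ?_ ?_ l
  · simp [tTup, hdualb, h]
  · intro l'
    simp [tTup, hdualb]

theorem diag_W_t_ne_j (i : ιF) (j : Fin (m' + 1)) (j' : Fin (m' + 1))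
    (h : j' ≠ j) : wdW b i j (tTup b i j') = 0 := by
  rw [wdW, wedgeDual_apply]
  obtain ⟨k₁, hk₁⟩ := Fin.exists_succAbove_eq (Ne.symm h : j ≠ j')
  apply Matrix.det_eq_zero_of_row_eq_zero k₁.succ
  intro k
  rw [Matrix.of_apply]
  refine Fin.cases ?_ ?_ k
  · simp [tTup, hdualb, hk₁]
  · intro k'
    simp [tTup, hdualb, hk₁, (Fin.succAbove_ne j k').symm]

end Diag

theorem altSum_apply {R M N ι β : Type*} [CommRing R] [AddCommGroup M] [Module R M]
    [AddCommGroup N] [Module R N] (s : Finset β) (f : β → M [⋀^ι]→ₗ[R] N) (x : ι → M) :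
    (∑ i ∈ s, f i) x = ∑ i ∈ s, f i x := by
  classical
  induction s using Finset.induction with
  | empty => simp
  | insert a s h ih => rw [Finset.sum_insert h, Finset.sum_insert h, AlternatingMap.add_apply, ih]

theorem Lambda1_le_span {K G : Type*} [Field K] [AddCommGroup G] [Module K G]
    {m' : ℕ} {ιF : Type*} [Fintype ιF] [DecidableEq ιF]
    {F : Submodule K G} (b : Module.Basis (ιF ⊕ Fin (m' + 1)) K G)
    (hbl : ∀ i, b (Sum.inl i) ∈ F)
    (hann : ∀ j, b.dualBasis (Sum.inr j) ∈ F.dualAnnihilator) :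
    Lambda1 K G F (m' + 1) ≤
      Submodule.span K
        {x : G [⋀^Fin (m' + 1)]→ₗ[K] K |
          ∃ (ξ : Module.Dual K G) (c : Fin m' → Module.Dual K G),
            (∀ k, c k ∈ F.dualAnnihilator) ∧ x = wedgeDual K G (Fin.cons ξ c)} := by
  classical
  intro α hα
  set tF : Fin (m' + 1) → G := fun k => b (Sum.inr k) with htF
  set β : G [⋀^Fin (m' + 1)]→ₗ[K] K :=
    (α tF) • wdFull b +
      ∑ i : ιF, ∑ j : Fin (m' + 1), (α (tTup b i j)) • wdW b i j with hβ
  have hcons : (fun k : Fin (m' + 1) => b.dualBasis (Sum.inr k)) =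
      Fin.cons (b.dualBasis (Sum.inr 0)) (fun k => b.dualBasis (Sum.inr k.succ)) := by
    funext k
    refine Fin.cases ?_ ?_ k <;> simp
  have hWFmem : wdFull b ∈ Submodule.span K
      {x : G [⋀^Fin (m' + 1)]→ₗ[K] K |
        ∃ (ξ : Module.Dual K G) (c : Fin m' → Module.Dual K G),
          (∀ k, c k ∈ F.dualAnnihilator) ∧ x = wedgeDual K G (Fin.cons ξ c)} :=
    Submodule.subset_span ⟨b.dualBasis (Sum.inr 0), fun k => b.dualBasis (Sum.inr k.succ),
      fun k => hann _, by rw [wdFull, hcons]⟩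
  have hWdmem : ∀ (i : ιF) (j : Fin (m' + 1)), wdW b i j ∈ Submodule.span K
      {x : G [⋀^Fin (m' + 1)]→ₗ[K] K |
        ∃ (ξ : Module.Dual K G) (c : Fin m' → Module.Dual K G),
          (∀ k, c k ∈ F.dualAnnihilator) ∧ x = wedgeDual K G (Fin.cons ξ c)} :=
    fun i j => Submodule.subset_span ⟨b.dualBasis (Sum.inl i),
      fun k => b.dualBasis (Sum.inr (j.succAbove k)), fun k => hann _, by rw [wdW]⟩
  have hβmem : β ∈ Submodule.span K
      {x : G [⋀^Fin (m' + 1)]→ₗ[K] K |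
        ∃ (ξ : Module.Dual K G) (c : Fin m' → Module.Dual K G),
          (∀ k, c k ∈ F.dualAnnihilator) ∧ x = wedgeDual K G (Fin.cons ξ c)} := by
    rw [hβ]
    exact Submodule.add_mem _ (Submodule.smul_mem _ _ hWFmem)
      (Submodule.sum_mem _ fun i _ => Submodule.sum_mem _ fun j _ =>
        Submodule.smul_mem _ _ (hWdmem i j))
  have hβeval : ∀ x : Fin (m' + 1) → G, β x =
      α tF * wdFull b x + ∑ i : ιF, ∑ j : Fin (m' + 1),
        α (tTup b i j) * wdW b i j x := by
    intro x
    rw [hβ, AlternatingMap.add_apply, AlternatingMap.smul_apply, altSum_apply, smul_eq_mul]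
    congr 1
    refine Finset.sum_congr rfl fun i _ => ?_
    rw [altSum_apply]
    refine Finset.sum_congr rfl fun j _ => ?_
    rw [AlternatingMap.smul_apply, smul_eq_mul]
  have hβ_tF : β tF = α tF := by
    rw [hβeval, diag_full_full, mul_one]
    have : ∀ i ∈ Finset.univ, (∑ j : Fin (m' + 1), α (tTup b i j) * wdW b i j tF) = 0 := by
      intro i _
      refine Finset.sum_eq_zero fun j _ => ?_
      rw [htF, diag_W_full, mul_zero]
    rw [Finset.sum_congr rfl this, Finset.sum_const_zero, add_zero]
  have hβ_t : ∀ (i : ιF) (j : Fin (m' + 1)), β (tTup b i j) = α (tTup b i j) := by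
    intro i j
    rw [hβeval, diag_full_t, mul_zero, zero_add]
    rw [Finset.sum_eq_single_of_mem i (Finset.mem_univ i) ?_]
    · rw [Finset.sum_eq_single_of_mem j (Finset.mem_univ j) ?_]
      · rw [diag_W_t_self, mul_one]
      · intro j' _ hj'
        rw [diag_W_t_ne_j b i j' j (Ne.symm hj'), mul_zero]
    · intro i' _ hi'
      refine Finset.sum_eq_zero fun j' _ => ?_
      rw [diag_W_t_ne_i b i' j' i j (Ne.symm hi'), mul_zero]
  suffices hαβ : α = β by
    rw [hαβ]; exact hβmem
  refine b.ext_alternating fun v hv => ?_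
  by_cases hA : ∃ l₁ l₂, l₁ ≠ l₂ ∧ (v l₁).isLeft ∧ (v l₂).isLeft
  · obtain ⟨l₁, l₂, h12, h1, h2⟩ := hA
    obtain ⟨i₁, e₁⟩ := Sum.isLeft_iff.mp h1
    obtain ⟨i₂, e₂⟩ := Sum.isLeft_iff.mp h2
    have m1 : b (v l₁) ∈ F := by rw [e₁]; exact hbl i₁
    have m2 : b (v l₂) ∈ F := by rw [e₂]; exact hbl i₂
    have hβL : β ∈ Lambda1 K G F (m' + 1) := span_le_Lambda1 F m' hβmem
    exact (mem_Lambda1.mp hα _ l₁ l₂ h12 m1 m2).trans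
      (mem_Lambda1.mp hβL _ l₁ l₂ h12 m1 m2).symm
  · have hone : ∀ l₁ l₂ : Fin (m' + 1), (v l₁).isLeft → (v l₂).isLeft → l₁ = l₂ := by
      intro l₁ l₂ p1 p2
      by_contra hne
      exact hA ⟨l₁, l₂, hne, p1, p2⟩
    by_cases hB : ∃ l₀ i₀, v l₀ = Sum.inl i₀
    · obtain ⟨l₀, i₀, hl₀⟩ := hB
      have hright : ∀ k : Fin m', ∃ jv, v (l₀.succAbove k) = Sum.inr jv := by
        intro k
        rcases hvk : v (l₀.succAbove k) with i | jv
        · exact absurd (hone _ _ (by simp [hvk]) (by simp [hl₀])) (Fin.succAbove_ne l₀ k)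
        · exact ⟨jv, rfl⟩
      choose w hw using hright
      have hwinj : Function.Injective w := by
        intro a c hac
        have : v (l₀.succAbove a) = v (l₀.succAbove c) := by rw [hw, hw, hac]
        exact Fin.succAbove_right_injective (hv this)
      have hnj : ∃ j₀ : Fin (m' + 1), ∀ k, w k ≠ j₀ := by
        by_contra hcon
        push_neg at hcon
        have hsurj : Function.Surjective w := fun j => hcon j
        have hcard := Fintype.card_le_of_surjective w hsurj
        simp only [Fintype.card_fin] at hcard
        omega
      obtain ⟨j₀, hj₀⟩ := hnj
      have hex : ∀ k, ∃ k', j₀.succAbove k' = w k := fun k => Fin.exists_succAbove_eq (hj₀ k)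
      choose w' hw' using hex
      have hw'inj : Function.Injective w' := by
        intro a c h
        apply hwinj
        rw [← hw', ← hw', h]
      let σ' : Fin m' ≃ Fin m' := Equiv.ofBijective w' (Finite.injective_iff_bijective.mp hw'inj)
      have hσ'w : ∀ k, w' (σ'.symm k) = k := fun k => σ'.apply_symm_apply k
      set s : Fin (m' + 1) → Fin (m' + 1) :=
        Fin.cons l₀ (fun k => l₀.succAbove (σ'.symm k)) with hs
      have hsinj : Function.Injective s := by
        rw [hs]
        refine Fin.cons_injective_iff.mpr ⟨?_, ?_⟩
        · rintro ⟨k, hk⟩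
          exact Fin.succAbove_ne l₀ (σ'.symm k) hk
        · exact Fin.succAbove_right_injective.comp σ'.symm.injective
      let σ : Equiv.Perm (Fin (m' + 1)) :=
        Equiv.ofBijective s (Finite.injective_iff_bijective.mp hsinj)
      have hcomp : (fun l => b (v l)) ∘ σ = tTup b i₀ j₀ := by
        funext q
        show b (v (s q)) = tTup b i₀ j₀ q
        refine Fin.cases ?_ ?_ q
        · rw [hs]
          simp [tTup, hl₀]
        · intro k
          rw [hs]
          simp only [Fin.cons_succ]
          rw [hw (σ'.symm k), ← hw' (σ'.symm k), hσ'w k]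
          simp [tTup]
      have hσα := α.map_perm (fun l => b (v l)) σ
      have hσβ := β.map_perm (fun l => b (v l)) σ
      rw [hcomp] at hσα hσβ
      have hkey : (Equiv.Perm.sign σ) • α (fun l => b (v l)) =
          (Equiv.Perm.sign σ) • β (fun l => b (v l)) := by
        rw [← hσα, ← hσβ, hβ_t]
      exact smul_left_cancel _ hkey
    · push_neg at hB
      have hright : ∀ l, ∃ jv, v l = Sum.inr jv := by
        intro l
        rcases hvl : v l with i | jv
        · exact absurd hvl (hB l i)
        · exact ⟨jv, rfl⟩
      choose w hw using hright
      have hwinj : Function.Injective w := by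
        intro a c hac
        apply hv
        rw [hw, hw, hac]
      let σ : Equiv.Perm (Fin (m' + 1)) :=
        Equiv.ofBijective w (Finite.injective_iff_bijective.mp hwinj)
      have hcomp : (fun l => b (v l)) ∘ σ.symm = tF := by
        funext q
        show b (v (σ.symm q)) = tF q
        rw [htF, hw (σ.symm q)]
        have : w (σ.symm q) = q := σ.apply_symm_apply q
        rw [this]
      have hσα := α.map_perm (fun l => b (v l)) σ.symm
      have hσβ := β.map_perm (fun l => b (v l)) σ.symm
      rw [hcomp] at hσα hσβ
      have hkey : (Equiv.Perm.sign σ.symm) • α (fun l => b (v l)) =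
          (Equiv.Perm.sign σ.symm) • β (fun l => b (v l)) := by
        rw [← hσα, ← hσβ, hβ_tF]
      exact smul_left_cancel _ hkey

/-- An `m`-form `α` on `G` satisfies `i(u)i(v)α = 0` for all `u, v ∈ F` iff
it lies in the image of the wedge map `G* ⊗ Λ^{m−1}(ann F) → ΛᵐG*`, i.e. `Λ₁ᵐG*` equals
the span of the wedges `ξ ∧ η₁ ∧ … ∧ η_{m-1}` with `ξ ∈ G*` and `ηᵢ` in the annihilator
of `F` (here `m = m'+1`, and `ann F ≅ π*(H*)`). -/
theorem stmt_15 (K G H : Type*) [Field K] [AddCommGroup G] [Module K G]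
    [AddCommGroup H] [Module K H] [FiniteDimensional K G] [FiniteDimensional K H]
    (F : Submodule K G) (π : G →ₗ[K] H) (hπ : Function.Surjective π)
    (hker : LinearMap.ker π = F) (m' : ℕ) (hm : Module.finrank K H = m' + 1) :
    Lambda1 K G F (m' + 1) =
      Submodule.span K
        {x : G [⋀^Fin (m' + 1)]→ₗ[K] K |
          ∃ (ξ : Module.Dual K G) (c : Fin m' → Module.Dual K G),
            (∀ k, c k ∈ F.dualAnnihilator) ∧ x = wedgeDual K G (Fin.cons ξ c)} := by
  classical
  refine le_antisymm ?_ (span_le_Lambda1 F m')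
  have e1 := π.quotKerEquivOfSurjective hπ
  rw [hker] at e1
  obtain ⟨W, hW⟩ := F.exists_isCompl
  have hWrank : Module.finrank K W = m' + 1 := by
    rw [← hm]
    exact ((Submodule.quotientEquivOfIsCompl F W hW).symm.trans e1).finrank_eq
  let bW : Module.Basis (Fin (m' + 1)) K W := Module.finBasisOfFinrankEq K W hWrank
  let bF : Module.Basis (Module.Free.ChooseBasisIndex K F) K F := Module.Free.chooseBasis K F
  let b : Module.Basis (Module.Free.ChooseBasisIndex K F ⊕ Fin (m' + 1)) K G :=
    (bF.prod bW).map (Submodule.prodEquivOfIsCompl F W hW)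
  have hblval : ∀ i, b (Sum.inl i) = (bF i : G) := by
    intro i
    show (Submodule.prodEquivOfIsCompl F W hW) ((bF.prod bW) (Sum.inl i)) = _
    rw [Submodule.coe_prodEquivOfIsCompl']
    have h1 : ((bF.prod bW) (Sum.inl i)) = (bF i, 0) :=
      Prod.ext (bF.prod_apply_inl_fst bW i) (bF.prod_apply_inl_snd bW i)
    rw [h1]
    simp
  have hbl : ∀ i, b (Sum.inl i) ∈ F := fun i => (hblval i) ▸ (bF i).2
  have hann : ∀ j, b.dualBasis (Sum.inr j) ∈ F.dualAnnihilator := by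
    intro j
    rw [Submodule.mem_dualAnnihilator]
    intro w hw
    have hsub : F ≤ LinearMap.ker (b.dualBasis (Sum.inr j)) := by
      have hF : F = Submodule.map F.subtype ⊤ := by
        rw [Submodule.map_top, Submodule.range_subtype]
      refine le_trans (le_of_eq hF) ?_
      rw [← bF.span_eq, Submodule.map_span, Submodule.span_le]
      rintro x ⟨y, ⟨i, rfl⟩, rfl⟩
      rw [SetLike.mem_coe, LinearMap.mem_ker]
      have : F.subtype (bF i) = b (Sum.inl i) := (hblval i).symm
      rw [this, hdualb]
      simp
    exact LinearMap.mem_ker.mp (hsub hw)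
  exact Lambda1_le_span b hbl hann
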